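/- Let λ̂_j ≥ 0 be a nondecreasing sequence with c j² ≤ λ̂_j + κ² for all j (Weyl lower bound) and let τ, τ̃, κ, κ̃ > 0 and α, α̃ > 1/2. Define c_j = τ̃^{2/α} τ^{-2/α} (κ̃² + λ̂_j)^{α̃/α} (κ² + λ̂_j)^{-1}. Then (i) the sequence (c_j) is bounded above and below by positive constants if and only if α̃ = α; (ii) if α̃ = α then c_j → (τ̃/τ)^{2/α}; (iii) ∑_j (c_j − 1)² < ∞ holds if and only if α̃ = α and τ̃ = τ. -/

import Mathlib

open Real Filter Topology

/-- Spectral computation behind equivalence of Gaussian Whittle–Matérn measures: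
for eigenvalues `λ̂_j` obeying the two-sided Weyl bound `c j² ≤ λ̂_j ≤ C j²`,
the sequence `c_j = τ̃^{2/α} τ^{-2/α} (κ̃² + λ̂_j)^{α̃/α} (κ² + λ̂_j)⁻¹` is
(i) bounded above and below by positive constants iff `α̃ = α`;
(ii) converges to `(τ̃/τ)^{2/α}` when `α̃ = α`;
(iii) satisfies `∑ (c_j − 1)² < ∞` iff `α̃ = α` and `τ̃ = τ`.
(Indices shifted so `lamhat j` is the `(j+1)`-th eigenvalue.) -/
theorem whittle_matern_measure_equivalence_sequence
    (lamhat : ℕ → ℝ) (hnonneg : ∀ j, 0 ≤ lamhat j) (hmono : Monotone lamhat)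
    (c C : ℝ) (hc : 0 < c) (hcC : c ≤ C)
    (hlow : ∀ j : ℕ, c * ((j : ℝ) + 1) ^ 2 ≤ lamhat j)
    (hupp : ∀ j : ℕ, lamhat j ≤ C * ((j : ℝ) + 1) ^ 2)
    (tau taut kappa kappat : ℝ) (htau : 0 < tau) (htaut : 0 < taut)
    (hkappa : 0 < kappa) (hkappat : 0 < kappat)
    (alpha alphat : ℝ) (halpha : 1 / 2 < alpha) (halphat : 1 / 2 < alphat)
    (cseq : ℕ → ℝ)
    (hcseq : ∀ j, cseq j = taut ^ (2 / alpha) * tau ^ (-(2 / alpha)) *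
      (kappat ^ 2 + lamhat j) ^ (alphat / alpha) * (kappa ^ 2 + lamhat j)⁻¹) :
    ((∃ m M : ℝ, 0 < m ∧ ∀ j, m ≤ cseq j ∧ cseq j ≤ M) ↔ alphat = alpha) ∧
      (alphat = alpha →
        Tendsto cseq atTop (nhds ((taut / tau) ^ (2 / alpha)))) ∧
      (Summable (fun j => (cseq j - 1) ^ 2) ↔ (alphat = alpha ∧ taut = tau)) := by
  have halpha0 : (0:ℝ) < alpha := by linarith
  have halphat0 : (0:ℝ) < alphat := by linarith
  set β : ℝ := alphat / alpha with hβ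
  set A : ℝ := taut ^ (2 / alpha) * tau ^ (-(2 / alpha)) with hA
  have hApos : 0 < A := by
    apply mul_pos (Real.rpow_pos_of_pos htaut _) (Real.rpow_pos_of_pos htau _)
  have hk2 : (0:ℝ) < kappa ^ 2 := by positivity
  have hkt2 : (0:ℝ) < kappat ^ 2 := by positivity
  have hu : ∀ j, 0 < kappa ^ 2 + lamhat j := fun j => by
    have := hnonneg j; positivity
  have hv : ∀ j, 0 < kappat ^ 2 + lamhat j := fun j => by
    have := hnonneg j; positivity
  -- lamhat → ∞
  have hLtop : Tendsto lamhat atTop atTop := by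
    apply tendsto_atTop_mono hlow
    have h1 : Tendsto (fun j : ℕ => ((j : ℝ) + 1)) atTop atTop :=
      tendsto_atTop_add_const_right _ 1 tendsto_natCast_atTop_atTop
    have h2 : Tendsto (fun j : ℕ => ((j : ℝ) + 1) ^ 2) atTop atTop := by
      have := h1.atTop_mul_atTop₀ h1
      exact this.congr fun j => by ring
    exact h2.const_mul_atTop hc
  have hutop : Tendsto (fun j => kappa ^ 2 + lamhat j) atTop atTop :=
    tendsto_atTop_add_const_left _ _ hLtop
  have hvtop : Tendsto (fun j => kappat ^ 2 + lamhat j) atTop atTop :=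
    tendsto_atTop_add_const_left _ _ hLtop
  -- ratio tends to 1
  have hratio : Tendsto (fun j => (kappat ^ 2 + lamhat j) / (kappa ^ 2 + lamhat j))
      atTop (𝓝 1) := by
    have hz : Tendsto (fun j => (kappa ^ 2 + lamhat j)⁻¹) atTop (𝓝 0) :=
      hutop.inv_tendsto_atTop
    have h1 : Tendsto (fun j => 1 + (kappat ^ 2 - kappa ^ 2) * (kappa ^ 2 + lamhat j)⁻¹)
        atTop (𝓝 (1 + (kappat ^ 2 - kappa ^ 2) * 0)) :=
      tendsto_const_nhds.add (tendsto_const_nhds.mul hz)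
    simp only [mul_zero, add_zero] at h1
    refine h1.congr fun j => ?_
    rw [eq_div_iff (hu j).ne', add_mul, one_mul, mul_assoc,
      inv_mul_cancel₀ (hu j).ne', mul_one]
    ring
  -- rewriting cseq with A, β
  have hform : ∀ j, cseq j = A * (kappat ^ 2 + lamhat j) ^ β * (kappa ^ 2 + lamhat j)⁻¹ :=
    fun j => hcseq j
  -- case α̃ = α
  have hcase_eq : alphat = alpha → Tendsto cseq atTop (𝓝 A) := by
    intro h
    have hform1 : ∀ j, cseq j = A * ((kappat ^ 2 + lamhat j) / (kappa ^ 2 + lamhat j)) := by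
      intro j
      rw [hform j, hβ, h, div_self halpha0.ne', Real.rpow_one, mul_assoc, ← div_eq_mul_inv]
    have := hratio.const_mul A
    rw [mul_one] at this
    exact this.congr fun j => (hform1 j).symm
  -- case α̃ > α
  have hcase_gt : alpha < alphat → Tendsto cseq atTop atTop := by
    intro h
    have hb1 : 1 < β := (one_lt_div halpha0).2 h
    have hsplit : ∀ j, cseq j =
        (A * ((kappat ^ 2 + lamhat j) / (kappa ^ 2 + lamhat j))) *
          (kappat ^ 2 + lamhat j) ^ (β - 1) := by
      intro j
      rw [hform j, show β = (β - 1) + 1 by ring, Real.rpow_add (hv j), Real.rpow_one]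
      field_simp
      ring
    have hvp : Tendsto (fun j => (kappat ^ 2 + lamhat j) ^ (β - 1)) atTop atTop :=
      (tendsto_rpow_atTop (by linarith)).comp hvtop
    have hfac : Tendsto (fun j => A * ((kappat ^ 2 + lamhat j) / (kappa ^ 2 + lamhat j)))
        atTop (𝓝 A) := by
      have := hratio.const_mul A; rwa [mul_one] at this
    exact (hfac.pos_mul_atTop hApos hvp).congr fun j => (hsplit j).symm
  -- case α̃ < α
  have hcase_lt : alphat < alpha → Tendsto cseq atTop (𝓝 0) := by
    intro h
    have hb1 : β < 1 := (div_lt_one halpha0).2 h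
    have hsplit : ∀ j, cseq j =
        (A * ((kappat ^ 2 + lamhat j) / (kappa ^ 2 + lamhat j))) *
          (kappat ^ 2 + lamhat j) ^ (β - 1) := by
      intro j
      rw [hform j, show β = (β - 1) + 1 by ring, Real.rpow_add (hv j), Real.rpow_one]
      field_simp
      ring
    have hvz : Tendsto (fun j => (kappat ^ 2 + lamhat j) ^ (β - 1)) atTop (𝓝 0) := by
      have := (tendsto_rpow_neg_atTop (y := 1 - β) (by linarith)).comp hvtop
      simpa [neg_sub, Function.comp_def] using this
    have hfac : Tendsto (fun j => A * ((kappat ^ 2 + lamhat j) / (kappa ^ 2 + lamhat j)))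
        atTop (𝓝 A) := by
      have := hratio.const_mul A; rwa [mul_one] at this
    have := hfac.mul hvz
    rw [mul_zero] at this
    exact this.congr fun j => (hsplit j).symm
  -- ratio bounds
  have hratlow : ∀ j, min (kappat ^ 2) (kappa ^ 2) / kappa ^ 2 ≤
      (kappat ^ 2 + lamhat j) / (kappa ^ 2 + lamhat j) := by
    intro j
    rw [div_le_div_iff₀ hk2 (hu j)]
    have h1 := min_le_left (kappat ^ 2) (kappa ^ 2)
    have h2 := min_le_right (kappat ^ 2) (kappa ^ 2)
    nlinarith [hnonneg j]
  have hrathigh : ∀ j, (kappat ^ 2 + lamhat j) / (kappa ^ 2 + lamhat j) ≤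
      max (kappat ^ 2) (kappa ^ 2) / kappa ^ 2 := by
    intro j
    rw [div_le_div_iff₀ (hu j) hk2]
    have h1 := le_max_left (kappat ^ 2) (kappa ^ 2)
    have h2 := le_max_right (kappat ^ 2) (kappa ^ 2)
    nlinarith [hnonneg j]
  refine ⟨⟨?_, ?_⟩, ?_, ?_, ?_⟩
  · -- bounded → α̃ = α
    rintro ⟨m, M, hm, hb⟩
    by_contra hne
    rcases lt_or_gt_of_ne hne with hlt | hgt
    · have h0 := hcase_lt hlt
      have : m ≤ 0 := ge_of_tendsto h0 (Eventually.of_forall fun j => (hb j).1)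
      linarith
    · have h0 := hcase_gt hgt
      obtain ⟨j, hj⟩ := (h0.eventually (eventually_gt_atTop M)).exists
      exact absurd (hb j).2 (not_le.2 hj)
  · -- α̃ = α → bounded
    intro h
    have hform1 : ∀ j, cseq j = A * ((kappat ^ 2 + lamhat j) / (kappa ^ 2 + lamhat j)) := by
      intro j
      rw [hform j, hβ, h, div_self halpha0.ne', Real.rpow_one, mul_assoc, ← div_eq_mul_inv]
    refine ⟨A * (min (kappat ^ 2) (kappa ^ 2) / kappa ^ 2),
      A * (max (kappat ^ 2) (kappa ^ 2) / kappa ^ 2), ?_, fun j => ?_⟩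
    · have : (0:ℝ) < min (kappat ^ 2) (kappa ^ 2) := lt_min hkt2 hk2
      positivity
    · rw [hform1 j]
      constructor
      · exact mul_le_mul_of_nonneg_left (hratlow j) hApos.le
      · exact mul_le_mul_of_nonneg_left (hrathigh j) hApos.le
  · -- convergence
    intro h
    have hAval : (taut / tau) ^ (2 / alpha) = A := by
      rw [hA, Real.div_rpow htaut.le htau.le, Real.rpow_neg htau.le, div_eq_mul_inv]
    rw [hAval]
    exact hcase_eq h
  · -- summable → α̃ = α ∧ τ̃ = τ
    intro hs
    have h0 : Tendsto (fun j => (cseq j - 1) ^ 2) atTop (𝓝 0) := hs.tendsto_atTop_zero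
    have hc1 : Tendsto cseq atTop (𝓝 1) := by
      have habs : Tendsto (fun j => |cseq j - 1|) atTop (𝓝 0) := by
        have := (Real.continuous_sqrt.tendsto 0).comp h0
        rw [Real.sqrt_zero] at this
        refine this.congr fun j => ?_
        simp [Function.comp, Real.sqrt_sq_eq_abs]
      have hsub : Tendsto (fun j => cseq j - 1) atTop (𝓝 0) :=
        (tendsto_zero_iff_abs_tendsto_zero _).mpr habs
      have := hsub.add_const 1
      simpa using this
    have hαeq : alphat = alpha := by
      by_contra hne
      rcases lt_or_gt_of_ne hne with hlt | hgt
      · have := tendsto_nhds_unique (hcase_lt hlt) hc1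
        norm_num at this
      · exact not_tendsto_nhds_of_tendsto_atTop (hcase_gt hgt) 1 hc1
    refine ⟨hαeq, ?_⟩
    have hA1 : A = 1 := tendsto_nhds_unique (hcase_eq hαeq) hc1
    have hAe : taut ^ (2 / alpha) = tau ^ (2 / alpha) := by
      rw [hA, Real.rpow_neg htau.le] at hA1
      have hp : (0:ℝ) < tau ^ (2 / alpha) := Real.rpow_pos_of_pos htau _
      field_simp at hA1
      exact hA1
    have hlog2 : Real.log taut = Real.log tau := by
      have := congrArg Real.log hAe
      rw [Real.log_rpow htaut, Real.log_rpow htau] at this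
      exact mul_left_cancel₀ (by positivity : (2:ℝ) / alpha ≠ 0) this
    rw [← Real.exp_log htaut, ← Real.exp_log htau, hlog2]
  · -- α̃ = α ∧ τ̃ = τ → summable
    rintro ⟨h1, h2⟩
    have hA1 : A = 1 := by
      rw [hA, h2, ← Real.rpow_add htau]
      simp
    have hform1 : ∀ j, cseq j = (kappat ^ 2 + lamhat j) / (kappa ^ 2 + lamhat j) := by
      intro j
      rw [hform j, hA1, one_mul, hβ, h1, div_self halpha0.ne', Real.rpow_one,
        ← div_eq_mul_inv]
    have hsum4 : Summable (fun j : ℕ => 1 / ((j : ℝ) + 1) ^ 4) := by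
      have h4 : Summable (fun n : ℕ => 1 / (n : ℝ) ^ 4) :=
        Real.summable_one_div_nat_pow.2 (by norm_num)
      have := (summable_nat_add_iff 1).2 h4
      exact this.congr fun n => by push_cast; ring
    have hbound : ∀ j : ℕ, (cseq j - 1) ^ 2 ≤
        (kappat ^ 2 - kappa ^ 2) ^ 2 / c ^ 2 * (1 / ((j : ℝ) + 1) ^ 4) := by
      intro j
      have hL := hlow j
      have hj1 : (0:ℝ) < ((j : ℝ) + 1) ^ 2 := by positivity
      have huge : c * ((j : ℝ) + 1) ^ 2 ≤ kappa ^ 2 + lamhat j := by nlinarith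
      have hcj : cseq j - 1 = (kappat ^ 2 - kappa ^ 2) / (kappa ^ 2 + lamhat j) := by
        rw [hform1 j, div_sub_one (hu j).ne']
        congr 1
        ring
      rw [hcj, div_pow]
      have hden : c ^ 2 * ((j : ℝ) + 1) ^ 4 ≤ (kappa ^ 2 + lamhat j) ^ 2 := by
        have hmm := mul_le_mul huge huge (by positivity : (0:ℝ) ≤ c * ((j:ℝ)+1) ^ 2) (hu j).le
        nlinarith [hmm]
      calc (kappat ^ 2 - kappa ^ 2) ^ 2 / (kappa ^ 2 + lamhat j) ^ 2
          ≤ (kappat ^ 2 - kappa ^ 2) ^ 2 / (c ^ 2 * ((j : ℝ) + 1) ^ 4) := by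
            apply div_le_div_of_nonneg_left (sq_nonneg _) (by positivity) hden
        _ = (kappat ^ 2 - kappa ^ 2) ^ 2 / c ^ 2 * (1 / ((j : ℝ) + 1) ^ 4) := by
            field_simp
    exact Summable.of_nonneg_of_le (fun j => sq_nonneg _) hbound (hsum4.mul_left _)
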